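/- Let n, m be natural numbers, z ∈ ℂ, and let E, F be m×m complex matrices, G an m×n complex matrix, and T an n×m complex matrix such that E·F = z·I_m. Then z^n · det(E − G·T) = det(E) · det(z·I_n − T·F·G). -/

import Mathlib

open Matrix

/-- If `E * F = z • I_m`, then
`z^n * det(E − G·T) = det(E) * det(z·I_n − T·F·G)`. -/
theorem stmt_0 (n m : ℕ) (z : ℂ) (E F : Matrix (Fin m) (Fin m) ℂ)
    (G : Matrix (Fin m) (Fin n) ℂ) (T : Matrix (Fin n) (Fin m) ℂ)
    (hEF : E * F = z • (1 : Matrix (Fin m) (Fin m) ℂ)) :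
    z ^ n * (E - G * T).det =
      E.det * (z • (1 : Matrix (Fin n) (Fin n) ℂ) - T * F * G).det := by
  rcases eq_or_ne z 0 with hz | hz
  · subst hz
    rcases Nat.eq_zero_or_pos n with hn | hn
    · subst hn
      have hGT : G * T = 0 := by
        ext i j
        simp [Matrix.mul_apply]
      simp [hGT, Matrix.det_fin_zero]
    · have hn' : (0:ℂ) ^ n = 0 := zero_pow (by omega)
      rw [hn', zero_mul]
      rcases eq_or_ne E.det 0 with hE | hE
      · simp [hE]
      · have hF : F = 0 := by
          have hinv : IsUnit E.det := isUnit_iff_ne_zero.mpr hE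
          have := congrArg (fun M => E⁻¹ * M) hEF
          simpa [Matrix.nonsing_inv_mul_cancel_left E F hinv] using this
        have : (0:Fin n → Fin n → ℂ) = ((0:ℂ) • (1 : Matrix (Fin n) (Fin n) ℂ) - T * F * G) := by
          simp [hF]
          rfl
        rw [← this]
        have : Nonempty (Fin n) := ⟨⟨0, hn⟩⟩
        exact (mul_eq_zero_of_right _ (Matrix.det_zero (n := Fin n) (R := ℂ))).symm
  · -- z ≠ 0 case
    have key : (1 - z⁻¹ • (T * (F * G))).det = (1 - z⁻¹ • ((F * G) * T)).det := by
      have := Matrix.det_one_add_mul_comm (-(z⁻¹ • T)) (F * G)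
      simpa [sub_eq_add_neg, Matrix.smul_mul, Matrix.mul_smul, Matrix.neg_mul,
        Matrix.mul_neg, smul_smul, Matrix.mul_assoc] using this
    have hfac : z • (1 : Matrix (Fin n) (Fin n) ℂ) - T * F * G
        = z • (1 - z⁻¹ • (T * (F * G))) := by
      rw [smul_sub, smul_smul, mul_inv_cancel₀ hz, one_smul, Matrix.mul_assoc]
    have hE : E * (1 - z⁻¹ • ((F * G) * T)) = E - G * T := by
      rw [Matrix.mul_sub, mul_one, mul_smul_comm]
      congr 1
      rw [← Matrix.mul_assoc, ← Matrix.mul_assoc, hEF]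
      simp [Matrix.smul_mul, smul_smul, inv_mul_cancel₀ hz]
    rw [hfac, Matrix.det_smul, Fintype.card_fin, ← mul_assoc, mul_comm E.det (z^n),
      mul_assoc, key, ← Matrix.det_mul, hE]
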